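/- For every k, l ∈ {1,…,6}, the number of permutations σ ∈ S_6 with (τ₁(σ), τ₃(σ)) = (π^[k], π^[l]) equals the (k,l) entry of the 6×6 matrix with rows (2,7,7,18,18,8), (7,0,14,25,6,8), (7,14,0,6,25,8), (18,6,25,77,48,36), (18,25,6,48,77,36), (8,8,8,36,36,24). Equivalently, under the uniform distribution on S_6, P(τ₁ = π^[k], τ₃ = π^[l]) equals 1/720 times that entry. -/

import Mathlib

open Equiv

/-- The transcript of an ordered pair of permutations: `τ(π₁,π₂) = π₁⁻¹ ∘ π₂`. -/
def transcript {m : ℕ} (π₁ π₂ : Perm (Fin m)) : Perm (Fin m) := π₁⁻¹ * π₂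

/-- The ordinal pattern of a triple `y` with pairwise distinct entries: the unique
permutation `π ∈ S_3` with `y (π 0) < y (π 1) < y (π 2)`. -/
noncomputable def opattern {α : Type*} [LinearOrder α] (y : Fin 3 → α) : Perm (Fin 3) :=
  if h : ∃ π : Perm (Fin 3), y (π 0) < y (π 1) ∧ y (π 1) < y (π 2) then h.choose else 1

/-- For `σ ∈ S_N`, viewed as the tuple `(σ 0, …, σ (N-1))`, the ordinal pattern of
the window `(σ t, σ (t+1), σ (t+2))` (0-based `t`). -/
noncomputable def patN {N : ℕ} (σ : Perm (Fin N)) (t : ℕ) (h : t + 2 < N) : Perm (Fin 3) :=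
  opattern fun i : Fin 3 => σ ⟨t + i, by have := i.isLt; omega⟩

/-- The lag-1 transcript of the ordinal patterns at (0-based) windows `t` and `t+1`;
this is `τ_{t+1}` in the 1-based numbering of the paper. -/
noncomputable def tauN {N : ℕ} (σ : Perm (Fin N)) (t : ℕ) (h : t + 3 < N) : Perm (Fin 3) :=
  transcript (patN σ t (by omega)) (patN σ (t + 1) (by omega))

/-- `π^[1] = (1,2,3)`, the identity. -/
def p1 : Perm (Fin 3) := 1
/-- `π^[2] = (1,3,2)`. -/
def p2 : Perm (Fin 3) := Equiv.swap 1 2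
/-- `π^[3] = (2,1,3)`. -/
def p3 : Perm (Fin 3) := Equiv.swap 0 1
/-- `π^[4] = (2,3,1)`, i.e. `0 ↦ 1 ↦ 2 ↦ 0`. -/
def p4 : Perm (Fin 3) := Equiv.swap 0 1 * Equiv.swap 1 2
/-- `π^[5] = (3,1,2)`, i.e. `0 ↦ 2 ↦ 1 ↦ 0`. -/
def p5 : Perm (Fin 3) := Equiv.swap 1 2 * Equiv.swap 0 1
/-- `π^[6] = (3,2,1)`. -/
def p6 : Perm (Fin 3) := Equiv.swap 0 2

/-- The labelling `k ↦ π^[k+1]` of the six elements of `S_3`. -/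
def lab : Fin 6 → Perm (Fin 3) := ![p1, p2, p3, p4, p5, p6]

/-- The lag-2 bivariate transcript counts over `S_6`. -/
def M12 : Matrix (Fin 6) (Fin 6) ℕ :=
  !![2, 7, 7, 18, 18, 8;
     7, 0, 14, 25, 6, 8;
     7, 14, 0, 6, 25, 8;
     18, 6, 25, 77, 48, 36;
     18, 25, 6, 48, 77, 36;
     8, 8, 8, 36, 36, 24]

def cpat {α : Type*} [LinearOrder α] (a b c : α) : Perm (Fin 3) :=
  if a < b then
    (if b < c then p1 else if a < c then p2 else p5)
  else
    (if a < c then p3 else if b < c then p4 else p6)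

lemma perm3_eq_one (e : Perm (Fin 3)) (h : ∀ i j : Fin 3, i < j → e i < e j) : e = 1 := by
  revert h; revert e; decide

lemma chain_unique {α : Type*} [LinearOrder α] (y : Fin 3 → α) (π ρ : Perm (Fin 3))
    (hπ : y (π 0) < y (π 1) ∧ y (π 1) < y (π 2))
    (hρ : y (ρ 0) < y (ρ 1) ∧ y (ρ 1) < y (ρ 2)) : π = ρ := by
  have hmono : ∀ a b : Fin 3, a < b → y (π a) < y (π b) := by
    intro a b hab
    fin_cases a <;> fin_cases b <;> simp_all <;> first
      | exact hπ.1 | exact hπ.2 | exact hπ.1.trans hπ.2 | omega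
  have key : ∀ i j : Fin 3, i < j → (ρ.trans π.symm) i < (ρ.trans π.symm) j := by
    intro i j hij
    by_contra hle
    push_neg at hle
    rcases lt_or_eq_of_le hle with hlt | heq
    · have h1 : y (π ((ρ.trans π.symm) j)) < y (π ((ρ.trans π.symm) i)) := hmono _ _ hlt
      simp only [Equiv.trans_apply, Equiv.apply_symm_apply] at h1
      have h2 : y (ρ i) < y (ρ j) := by
        fin_cases i <;> fin_cases j <;> simp_all <;> first
          | exact hρ.1 | exact hρ.2 | exact hρ.1.trans hρ.2 | omega
      exact absurd h2 (not_lt.2 h1.le)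
    · have := (ρ.trans π.symm).injective heq.symm
      omega
  have h1 : (ρ.trans π.symm) = (1 : Perm (Fin 3)) := perm3_eq_one _ key
  ext x
  have := congrArg (fun e : Perm (Fin 3) => π (e x)) h1
  simp only [Equiv.Perm.coe_one, id_eq] at this
  rw [show ((ρ.trans π.symm) x) = π.symm (ρ x) from rfl] at this
  simp only [Equiv.apply_symm_apply] at this
  exact congrArg Fin.val this.symm

lemma cpat_chain {α : Type*} [LinearOrder α] (y : Fin 3 → α) (hy : Function.Injective y) :
    y (cpat (y 0) (y 1) (y 2) 0) < y (cpat (y 0) (y 1) (y 2) 1) ∧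
    y (cpat (y 0) (y 1) (y 2) 1) < y (cpat (y 0) (y 1) (y 2) 2) := by
  have h01 : y 0 ≠ y 1 := fun h => by have := hy h; simp at this
  have h02 : y 0 ≠ y 2 := fun h => by have := hy h; simp at this
  have h12 : y 1 ≠ y 2 := fun h => by have := hy h; simp at this
  unfold cpat
  split_ifs with hab hbc hac hac hbc <;>
    simp only [p1, p2, p3, p4, p5, p6, Equiv.Perm.coe_one, id_eq, Equiv.Perm.coe_mul,
      Function.comp_apply, Equiv.swap_apply_def] <;>
    norm_num <;>
    refine ⟨?_, ?_⟩ <;>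
      first
        | assumption
        | exact (h01.lt_or_gt).resolve_left (by assumption)
        | exact (h02.lt_or_gt).resolve_left (by assumption)
        | exact (h12.lt_or_gt).resolve_left (by assumption)

lemma opattern_eq_cpat {α : Type*} [LinearOrder α] (y : Fin 3 → α) (hy : Function.Injective y) :
    opattern y = cpat (y 0) (y 1) (y 2) := by
  have hc := cpat_chain y hy
  have hex : ∃ π : Perm (Fin 3), y (π 0) < y (π 1) ∧ y (π 1) < y (π 2) := ⟨_, hc⟩
  rw [opattern, dif_pos hex]
  exact chain_unique y _ _ hex.choose_spec hc

lemma patN_eq {N : ℕ} (σ : Perm (Fin N)) (t : ℕ) (h : t + 2 < N) :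
    patN σ t h = cpat (σ ⟨t, by omega⟩) (σ ⟨t + 1, by omega⟩) (σ ⟨t + 2, by omega⟩) := by
  rw [patN, opattern_eq_cpat]
  · congr 1 <;> simp
  · intro a b hab
    have := σ.injective hab
    simp only [Fin.mk.injEq] at this
    exact Fin.ext (by omega)

def P6 (k l : Fin 6) (σ : Perm (Fin 6)) : Prop :=
  transcript (cpat (σ 0) (σ 1) (σ 2)) (cpat (σ 1) (σ 2) (σ 3)) = lab k ∧
  transcript (cpat (σ 2) (σ 3) (σ 4)) (cpat (σ 3) (σ 4) (σ 5)) = lab l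

instance (k l : Fin 6) : DecidablePred (P6 k l) := fun σ => by unfold P6; infer_instance

lemma cond_iff (k l : Fin 6) (σ : Perm (Fin 6)) :
    (tauN σ 0 (show 3 < 6 by omega) = lab k ∧ tauN σ 2 (show 5 < 6 by omega) = lab l) ↔ P6 k l σ := by
  rw [tauN, tauN, patN_eq, patN_eq, patN_eq, patN_eq]
  rfl


theorem transcript_biv2_iid : ∀ k l : Fin 6,
    Nat.card {σ : Perm (Fin 6) //
        tauN σ 0 (by omega) = lab k ∧ tauN σ 2 (by omega) = lab l} = M12 k l ∧
    (Nat.card {σ : Perm (Fin 6) //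
        tauN σ 0 (by omega) = lab k ∧ tauN σ 2 (by omega) = lab l} : ℚ) / 720 =
      (1/720 : ℚ) * (M12 k l : ℚ) := by
  intro k l
  have hcard : Nat.card {σ : Perm (Fin 6) //
      tauN σ 0 (by omega) = lab k ∧ tauN σ 2 (by omega) = lab l} = M12 k l := by
    rw [Nat.card_congr (Equiv.subtypeEquivRight (cond_iff k l))]
    rw [Nat.card_eq_fintype_card]
    set_option maxRecDepth 100000 in
    set_option maxHeartbeats 4000000 in
    fin_cases k <;> fin_cases l <;> decide
  refine ⟨hcard, ?_⟩
  rw [hcard]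
  ring
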